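/- Let A be a measurable subset of ℝ^N with finite Lebesgue measure, let f, f_n : A → ℝ (n ∈ ℕ) be measurable functions with f_n → f uniformly on A and with f essentially bounded on A, and let g, g_n ∈ L¹(A) with g_n → g weakly in L¹(A). Then f_n·g_n → f·g weakly in L¹(A); that is, for every essentially bounded measurable φ : A → ℝ, ∫_A φ·(f_n·g_n − f·g) dx → 0 as n → ∞. -/

import Mathlib

open MeasureTheory Filter ENNReal

lemma uniform_L1_bound {α : Type*} [MeasurableSpace α] (μ : Measure α) [IsFiniteMeasure μ]
    (gn : ℕ → α → ℝ) (hgn : ∀ n, Integrable (gn n) μ)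
    (hconv : ∀ φ : α → ℝ, Measurable φ → (∃ C : ℝ, ∀ᵐ x ∂μ, |φ x| ≤ C) →
      ∃ L : ℝ, Tendsto (fun n => ∫ x, φ x * gn n x ∂μ) atTop (nhds L)) :
    ∃ C : ℝ, ∀ n, ∫ x, |gn n x| ∂μ ≤ C := by
  haveI : Fact ((1 : ENNReal) ≤ ⊤) := ⟨le_top⟩
  have key : ∀ φ : Lp ℝ ⊤ μ, ∀ᵐ x ∂μ, ‖(φ : α → ℝ) x‖ ≤ ‖φ‖ := by
    intro φ
    have hne : eLpNormEssSup (φ : α → ℝ) μ ≠ ∞ := by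
      rw [← eLpNorm_exponent_top]; exact Lp.eLpNorm_ne_top φ
    filter_upwards [enorm_ae_le_eLpNormEssSup (φ : α → ℝ) μ] with x hx
    rw [Lp.norm_def, eLpNorm_exponent_top]
    calc ‖(φ : α → ℝ) x‖ = ((‖(φ : α → ℝ) x‖₊ : ENNReal)).toReal := by simp
      _ ≤ (eLpNormEssSup (φ : α → ℝ) μ).toReal := ENNReal.toReal_mono hne hx
  have int : ∀ (n : ℕ) (φ : Lp ℝ ⊤ μ),
      Integrable (fun x => (φ : α → ℝ) x * gn n x) μ :=
    fun n φ => (hgn n).bdd_mul (Lp.aestronglyMeasurable φ) (key φ)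
  have bound : ∀ (n : ℕ) (φ : Lp ℝ ⊤ μ),
      ‖∫ x, (φ : α → ℝ) x * gn n x ∂μ‖ ≤ (∫ x, |gn n x| ∂μ) * ‖φ‖ := by
    intro n φ
    calc ‖∫ x, (φ : α → ℝ) x * gn n x ∂μ‖ ≤ ∫ x, ‖(φ : α → ℝ) x * gn n x‖ ∂μ :=
          norm_integral_le_integral_norm _
      _ ≤ ∫ x, ‖φ‖ * |gn n x| ∂μ := by
          refine integral_mono_of_nonneg (Eventually.of_forall fun x => norm_nonneg _)
            (((hgn n).abs).const_mul _) ?_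
          filter_upwards [key φ] with x hx
          rw [norm_mul, Real.norm_eq_abs (gn n x)]
          exact mul_le_mul_of_nonneg_right hx (abs_nonneg _)
      _ = (∫ x, |gn n x| ∂μ) * ‖φ‖ := by rw [integral_const_mul]; ring
  let T : ℕ → Lp ℝ ⊤ μ →L[ℝ] ℝ := fun n => LinearMap.mkContinuous
    { toFun := fun φ => ∫ x, (φ : α → ℝ) x * gn n x ∂μ
      map_add' := fun φ ψ => by
        rw [← integral_add (int n φ) (int n ψ)]
        refine integral_congr_ae ?_
        filter_upwards [Lp.coeFn_add φ ψ] with x hx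
        rw [hx]; simp [add_mul]
      map_smul' := fun c φ => by
        simp only [RingHom.id_apply, smul_eq_mul]
        rw [← integral_const_mul]
        refine integral_congr_ae ?_
        filter_upwards [Lp.coeFn_smul c φ] with x hx
        rw [hx]; simp [mul_assoc] }
    (∫ x, |gn n x| ∂μ) (bound n)
  have hT : ∀ (n : ℕ) (φ : Lp ℝ ⊤ μ), T n φ = ∫ x, (φ : α → ℝ) x * gn n x ∂μ :=
    fun n φ => rfl
  have hpt : ∀ φ : Lp ℝ ⊤ μ, ∃ C, ∀ n, ‖T n φ‖ ≤ C := by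
    intro φ
    have hae := (Lp.aestronglyMeasurable φ).aemeasurable
    set ψ := hae.mk (φ : α → ℝ) with hψ
    have hψm : Measurable ψ := hae.measurable_mk
    have hψeq : (φ : α → ℝ) =ᵐ[μ] ψ := hae.ae_eq_mk
    have hb : ∃ C : ℝ, ∀ᵐ x ∂μ, |ψ x| ≤ C := by
      refine ⟨‖φ‖, ?_⟩
      filter_upwards [key φ, hψeq] with x h1 h2
      rw [← h2]; exact h1
    obtain ⟨L, hL⟩ := hconv ψ hψm hb
    have heq : ∀ n, T n φ = ∫ x, ψ x * gn n x ∂μ := by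
      intro n
      rw [hT]
      refine integral_congr_ae ?_
      filter_upwards [hψeq] with x hx
      rw [hx]
    have htend : Tendsto (fun n => ‖T n φ‖) atTop (nhds ‖L‖) := by
      simp only [heq]; exact hL.norm
    obtain ⟨C, hC⟩ := htend.bddAbove_range
    exact ⟨C, fun n => hC ⟨n, rfl⟩⟩
  obtain ⟨C', hC'⟩ := banach_steinhaus hpt
  refine ⟨C', fun n => ?_⟩
  -- test against the sign of gn n
  have haeg := (hgn n).1.aemeasurable
  set G := haeg.mk (gn n) with hGdef
  have hGm : Measurable G := haeg.measurable_mk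
  have hGeq : gn n =ᵐ[μ] G := haeg.ae_eq_mk
  set s : α → ℝ := fun x => if G x < 0 then -1 else 1 with hs
  have hsm : Measurable s :=
    Measurable.ite (measurableSet_lt hGm measurable_const) measurable_const measurable_const
  have hsb : ∀ x, ‖s x‖ ≤ 1 := by
    intro x; by_cases h : G x < 0 <;> simp [hs, h]
  have hmem : MemLp s ∞ μ :=
    memLp_top_of_bound hsm.aestronglyMeasurable 1 (Eventually.of_forall hsb)
  set φ₀ : Lp ℝ ⊤ μ := hmem.toLp s with hφ₀
  have hφ₀norm : ‖φ₀‖ ≤ 1 := by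
    have h := Lp.norm_le_of_ae_bound (f := φ₀) (C := 1) zero_le_one
      (by filter_upwards [hmem.coeFn_toLp] with x hx; rw [hx]; exact hsb x)
    simpa using h
  have hval : T n φ₀ = ∫ x, |gn n x| ∂μ := by
    rw [hT]
    refine integral_congr_ae ?_
    filter_upwards [hmem.coeFn_toLp, hGeq] with x hx hxg
    rw [hx, hxg]
    by_cases h : G x < 0
    · simp only [hs, if_pos h]; rw [abs_of_neg h]; ring
    · simp only [hs, if_neg h]; rw [abs_of_nonneg (not_lt.mp h), one_mul]
  calc ∫ x, |gn n x| ∂μ = T n φ₀ := hval.symm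
    _ ≤ ‖T n φ₀‖ := le_abs_self _
    _ ≤ ‖T n‖ * ‖φ₀‖ := (T n).le_opNorm φ₀
    _ ≤ C' * 1 := mul_le_mul (hC' n) hφ₀norm (norm_nonneg _) ((norm_nonneg _).trans (hC' n))
    _ = C' := mul_one C'

/-- **Key step of the weak–a.e. convergence lemma.**
If `A ⊆ ℝ^N` is measurable with finite measure, `fₙ → f` uniformly on `A`
with `f` essentially bounded on `A`, and `gₙ ⇀ g` weakly in `L¹(A)`, then
`fₙ·gₙ ⇀ f·g` weakly in `L¹(A)`: for every essentially bounded measurable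
`φ`, `∫_A φ·(fₙ·gₙ − f·g) dx → 0`. -/
theorem weak_strong_product_convergence {N : ℕ} (A : Set (Fin N → ℝ))
    (hA : MeasurableSet A) (hAfin : volume A < ⊤)
    (f : (Fin N → ℝ) → ℝ) (fn : ℕ → (Fin N → ℝ) → ℝ)
    (hf : Measurable f) (hfn : ∀ n, Measurable (fn n))
    (hunif : TendstoUniformlyOn (fun n x => fn n x) f atTop A)
    (hfb : ∃ C : ℝ, ∀ᵐ x ∂(volume.restrict A), |f x| ≤ C)
    (g : (Fin N → ℝ) → ℝ) (gn : ℕ → (Fin N → ℝ) → ℝ)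
    (hg : IntegrableOn g A) (hgn : ∀ n, IntegrableOn (gn n) A)
    (hweak_g : ∀ φ : (Fin N → ℝ) → ℝ, Measurable φ →
      (∃ C : ℝ, ∀ᵐ x ∂(volume.restrict A), |φ x| ≤ C) →
      Tendsto (fun n => ∫ x in A, φ x * gn n x) atTop
        (nhds (∫ x in A, φ x * g x))) :
    ∀ φ : (Fin N → ℝ) → ℝ, Measurable φ →
      (∃ C : ℝ, ∀ᵐ x ∂(volume.restrict A), |φ x| ≤ C) →
      Tendsto (fun n => ∫ x in A, φ x * (fn n x * gn n x - f x * g x)) atTop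
        (nhds 0) := by
  intro φ hφm hφb
  set μ := volume.restrict A with hμ
  haveI : IsFiniteMeasure μ := ⟨by rw [hμ, Measure.restrict_apply_univ]; exact hAfin⟩
  obtain ⟨Cφ₀, hCφ₀⟩ := hφb
  obtain ⟨Cf₀, hCf₀⟩ := hfb
  set Cφ := max Cφ₀ 0 with hCφdef
  set Cf := max Cf₀ 0 with hCfdef
  have hCφnn : 0 ≤ Cφ := le_max_right _ _
  have hCfnn : 0 ≤ Cf := le_max_right _ _
  have hCφ : ∀ᵐ x ∂μ, |φ x| ≤ Cφ := hCφ₀.mono fun x h => h.trans (le_max_left _ _)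
  have hCf : ∀ᵐ x ∂μ, |f x| ≤ Cf := hCf₀.mono fun x h => h.trans (le_max_left _ _)
  -- uniform L¹ bound on gn
  obtain ⟨C₀, hC₀⟩ := uniform_L1_bound μ gn (fun n => hgn n)
    (fun ψ hm hb => ⟨_, hweak_g ψ hm hb⟩)
  have hC₀nn : 0 ≤ C₀ := (integral_nonneg fun x => abs_nonneg _).trans (hC₀ 0)
  -- the two pieces
  set a : ℕ → ℝ := fun n => ∫ x, φ x * ((fn n x - f x) * gn n x) ∂μ with ha_def
  set b : ℕ → ℝ :=
    fun n => (∫ x, φ x * f x * gn n x ∂μ) - ∫ x, φ x * f x * g x ∂μ with hb_def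
  -- b → 0
  have hb0 : Tendsto b atTop (nhds 0) := by
    have h := hweak_g (fun x => φ x * f x) (hφm.mul hf)
      ⟨Cφ * Cf, by
        filter_upwards [hCφ, hCf] with x h1 h2
        rw [abs_mul]
        exact mul_le_mul h1 h2 (abs_nonneg _) hCφnn⟩
    have := h.sub_const (∫ x, φ x * f x * g x ∂μ)
    simpa [hb_def, sub_self] using this
  -- a → 0
  have ha0 : Tendsto a atTop (nhds 0) := by
    rw [Metric.tendsto_atTop]
    intro ε hε
    set δ := ε / ((Cφ + 1) * (C₀ + 1)) with hδdef
    have hδpos : 0 < δ := by positivity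
    have := (Metric.tendstoUniformlyOn_iff.mp hunif) δ hδpos
    obtain ⟨M, hM⟩ := this.exists_forall_of_atTop
    refine ⟨M, fun n hn => ?_⟩
    rw [Real.dist_eq, sub_zero]
    have hbound : |a n| ≤ Cφ * δ * C₀ := by
      have han : a n = ∫ x, φ x * ((fn n x - f x) * gn n x) ∂μ := rfl
      have h1 : |a n| ≤ ∫ x, ‖φ x * ((fn n x - f x) * gn n x)‖ ∂μ := by
        rw [han, ← Real.norm_eq_abs]
        exact norm_integral_le_integral_norm _
      have h2 : ∫ x, ‖φ x * ((fn n x - f x) * gn n x)‖ ∂μ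
          ≤ ∫ x, (Cφ * δ) * |gn n x| ∂μ := by
        refine integral_mono_of_nonneg (Eventually.of_forall fun x => norm_nonneg _)
          (((hgn n).abs).const_mul _) ?_
        filter_upwards [hCφ, ae_restrict_mem hA] with x h1' hx
        have hfd : |fn n x - f x| ≤ δ := by
          have := hM n hn x hx
          rw [Real.dist_eq, abs_sub_comm] at this
          exact this.le
        rw [Real.norm_eq_abs, abs_mul, abs_mul]
        calc |φ x| * (|fn n x - f x| * |gn n x|) ≤ Cφ * (δ * |gn n x|) := by
              apply mul_le_mul h1' _ (by positivity) hCφnn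
              exact mul_le_mul_of_nonneg_right hfd (abs_nonneg _)
          _ = Cφ * δ * |gn n x| := by ring
      have h3 : ∫ x, (Cφ * δ) * |gn n x| ∂μ ≤ Cφ * δ * C₀ := by
        rw [integral_const_mul]
        exact mul_le_mul_of_nonneg_left (hC₀ n) (by positivity)
      linarith
    have hXε : ((Cφ + 1) * (C₀ + 1)) * δ = ε := by
      rw [hδdef]; field_simp
    have : Cφ * δ * C₀ < ε := by
      nlinarith [mul_pos hδpos (show (0:ℝ) < Cφ + C₀ + 1 by linarith)]
    linarith [hbound]
  -- eventual equality and conclusion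
  have hev : ∀ᶠ n in atTop,
      (∫ x in A, φ x * (fn n x * gn n x - f x * g x)) = a n + b n := by
    have h1 := (Metric.tendstoUniformlyOn_iff.mp hunif) 1 one_pos
    filter_upwards [h1] with n hn
    have hfd : ∀ᵐ x ∂μ, ‖fn n x - f x‖ ≤ 1 := by
      filter_upwards [ae_restrict_mem hA] with x hx
      rw [Real.norm_eq_abs, abs_sub_comm]
      exact (hn x hx).le
    have I1 : Integrable (fun x => φ x * ((fn n x - f x) * gn n x)) μ := by
      refine Integrable.bdd_mul ?_ hφm.aestronglyMeasurable (by filter_upwards [hCφ] with x h; rwa [Real.norm_eq_abs])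
      · exact (hgn n).bdd_mul ((hfn n).sub hf).aestronglyMeasurable hfd
    have I2 : Integrable (fun x => φ x * f x * gn n x) μ :=
      (hgn n).bdd_mul (hφm.mul hf).aestronglyMeasurable
        (by filter_upwards [hCφ, hCf] with x h1' h2'
            rw [Real.norm_eq_abs, abs_mul]
            exact mul_le_mul h1' h2' (abs_nonneg _) hCφnn)
    have I3 : Integrable (fun x => φ x * f x * g x) μ :=
      hg.bdd_mul (hφm.mul hf).aestronglyMeasurable
        (by filter_upwards [hCφ, hCf] with x h1' h2'
            rw [Real.norm_eq_abs, abs_mul]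
            exact mul_le_mul h1' h2' (abs_nonneg _) hCφnn)
    have hptw : ∀ x, φ x * (fn n x * gn n x - f x * g x)
        = φ x * ((fn n x - f x) * gn n x) + (φ x * f x * gn n x - φ x * f x * g x) := by
      intro x; ring
    calc (∫ x in A, φ x * (fn n x * gn n x - f x * g x))
        = ∫ x, (φ x * ((fn n x - f x) * gn n x)
            + (φ x * f x * gn n x - φ x * f x * g x)) ∂μ := by
          refine integral_congr_ae (Eventually.of_forall fun x => hptw x)
      _ = a n + b n := by
          rw [integral_add I1
            (show Integrable (fun x => φ x * f x * gn n x - φ x * f x * g x) μ from I2.sub I3),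
            integral_sub I2 I3]
  have := (ha0.add hb0)
  rw [add_zero] at this
  exact this.congr' (hev.mono fun n hn => hn.symm)
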